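/- For typed feature structures A and B: A ⊑ B if and only if Abs(A) ≼ Abs(B). -/

import Mathlib

def deltaStar {F N : Type*} (d : N → F → Option N) : N → List F → Option N
  | q, [] => some q
  | q, f :: rest => (d q f).bind fun q' => deltaStar d q' rest

/-- A typed feature structure: a finite rooted graph with feature-labelled arcs,
all of whose nodes are reachable from the root. -/
structure TFS (F N : Type*) where
  Q : Finset N
  root : N
  root_mem : root ∈ Q
  delta : N → F → Option N
  delta_dom : ∀ q f q', delta q f = some q' → q ∈ Q ∧ q' ∈ Q
  reach : ∀ q ∈ Q, ∃ π : List F, deltaStar delta root π = some q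

/-- The value `δ(q̄, π)` of a path from the root. -/
def TFS.val {F N : Type*} (A : TFS F N) (π : List F) : Option N :=
  deltaStar A.delta A.root π

/-- `Π(A)`, the set of paths of `A`. -/
def TFS.paths {F N : Type*} (A : TFS F N) : Set (List F) :=
  {π | (A.val π).isSome}

/-- A TFS is cyclic if some node returns to itself via a nonempty path. -/
def TFS.Cyclic {F N : Type*} (A : TFS F N) : Prop :=
  ∃ q ∈ A.Q, ∃ α : List F, α ≠ [] ∧ deltaStar A.delta q α = some q

/-- Subsumption of TFSs via a subsumption morphism. -/
def Subsumes {F N T : Type*} [PartialOrder T] (θ : N → T) (A B : TFS F N) : Prop :=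
  ∃ h : N → N,
    (∀ q ∈ A.Q, h q ∈ B.Q) ∧
    h A.root = B.root ∧
    (∀ q ∈ A.Q, θ q ≤ θ (h q)) ∧
    (∀ q f q', A.delta q f = some q' → B.delta (h q) f = some (h q'))

/-- Bounded completeness: every up-bounded subset has a least upper bound. -/
def BddComplete (T : Type*) [PartialOrder T] : Prop :=
  ∀ S : Set T, (∃ u, ∀ t ∈ S, t ≤ u) → ∃ l, IsLUB S l

/-- A pre-abstract feature structure: a partial assignment of types to paths
(whose domain is the path set `Π`) together with a reentrancy relation. -/
structure PreAFS (F T : Type*) where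
  theta : List F → Option T
  rel : List F → List F → Prop

/-- The path set `Π` of a pre-AFS. -/
def PreAFS.dom {F T : Type*} (A : PreAFS F T) : Set (List F) :=
  {π | (A.theta π).isSome}

/-- The pre-AFS conditions: `Π` is nonempty and `≈ ⊆ Π × Π`. -/
def IsPreAFS {F T : Type*} (A : PreAFS F T) : Prop :=
  A.dom.Nonempty ∧ ∀ π₁ π₂, A.rel π₁ π₂ → π₁ ∈ A.dom ∧ π₂ ∈ A.dom

/-- `Π` is prefix-closed. -/
def PrefixClosed {F T : Type*} (A : PreAFS F T) : Prop :=
  ∀ π α : List F, π ++ α ∈ A.dom → π ∈ A.dom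

/-- Fusion-closedness. -/
def FusionClosed {F T : Type*} (A : PreAFS F T) : Prop :=
  ∀ π π' α α' : List F, π ++ α ∈ A.dom → π' ++ α' ∈ A.dom → A.rel π π' →
    π ++ α' ∈ A.dom ∧ π' ++ α ∈ A.dom ∧
    A.rel (π ++ α') (π' ++ α') ∧ A.rel (π' ++ α) (π ++ α)

/-- `≈` is an equivalence relation on `Π`. -/
def EquivOnDom {F T : Type*} (A : PreAFS F T) : Prop :=
  (∀ π ∈ A.dom, A.rel π π) ∧
  (∀ π₁ π₂, A.rel π₁ π₂ → A.rel π₂ π₁) ∧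
  (∀ π₁ π₂ π₃, A.rel π₁ π₂ → A.rel π₂ π₃ → A.rel π₁ π₃)

/-- `≈` has finitely many equivalence classes. -/
def FiniteIndex {F T : Type*} (A : PreAFS F T) : Prop :=
  {C : Set (List F) | ∃ π ∈ A.dom, C = {π' | A.rel π π'}}.Finite

/-- `Θ` respects the equivalence `≈`. -/
def RespectsRel {F T : Type*} (A : PreAFS F T) : Prop :=
  ∀ π₁ π₂, A.rel π₁ π₂ → A.theta π₁ = A.theta π₂

/-- Abstract feature structures. -/
def IsAFS {F T : Type*} (A : PreAFS F T) : Prop :=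
  IsPreAFS A ∧ PrefixClosed A ∧ FusionClosed A ∧
    EquivOnDom A ∧ FiniteIndex A ∧ RespectsRel A

/-- Bounded completeness: every up-bounded subset has a least upper bound. -/
def BddCompleteTypes (T : Type*) [PartialOrder T] : Prop :=
  ∀ S : Set T, (∃ u, ∀ t ∈ S, t ≤ u) → ∃ l, IsLUB S l

/-- The abstraction of a TFS: `Π_A = Π(A)`, `Θ_A(π) = θ(δ(q̄,π))`,
and `π₁ ≈_A π₂` iff both paths lead to the same node. -/
def Abs {F N T : Type*} (θ : N → T) (A : TFS F N) : PreAFS F T :=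
  ⟨fun π => (A.val π).map θ,
   fun π₁ π₂ => ∃ q, A.val π₁ = some q ∧ A.val π₂ = some q⟩

/-- The order `≼` on (pre-)AFSs. -/
def AbsLE {F T : Type*} [PartialOrder T] (A B : PreAFS F T) : Prop :=
  A.dom ⊆ B.dom ∧
  (∀ π₁ π₂, A.rel π₁ π₂ → B.rel π₁ π₂) ∧
  ∀ π ∈ A.dom, ∀ t₁ t₂ : T, A.theta π = some t₁ → B.theta π = some t₂ → t₁ ≤ t₂


lemma deltaStar_append {F N : Type*} (d : N → F → Option N) (q : N) (π α : List F) :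
    deltaStar d q (π ++ α) = (deltaStar d q π).bind (fun q' => deltaStar d q' α) := by
  induction π generalizing q with
  | nil => simp [deltaStar]
  | cons f rest ih =>
    simp only [List.cons_append, deltaStar]
    cases d q f with
    | none => simp
    | some q1 => simp [ih]

lemma deltaStar_mem {F N : Type*} (A : TFS F N) :
    ∀ (π : List F) (q0 q : N), q0 ∈ A.Q → deltaStar A.delta q0 π = some q → q ∈ A.Q := by
  intro π
  induction π with
  | nil => intro q0 q h0 h; simp [deltaStar] at h; subst h; exact h0
  | cons f rest ih =>
    intro q0 q h0 h
    simp only [deltaStar] at h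
    cases hq1 : A.delta q0 f with
    | none => simp [hq1] at h
    | some q1 =>
      rw [hq1] at h
      exact ih q1 q (A.delta_dom q0 f q1 hq1).2 h

lemma val_mem {F N : Type*} (A : TFS F N) {π : List F} {q : N}
    (h : A.val π = some q) : q ∈ A.Q :=
  deltaStar_mem A π A.root q A.root_mem h

lemma morph_val {F N : Type*} (A B : TFS F N) (h : N → N)
    (hr : h A.root = B.root)
    (hd : ∀ q f q', A.delta q f = some q' → B.delta (h q) f = some (h q')) :
    ∀ (π : List F) (q : N), A.val π = some q → B.val π = some (h q) := by
  suffices H : ∀ (π : List F) (q0 q : N), deltaStar A.delta q0 π = some q →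
      deltaStar B.delta (h q0) π = some (h q) by
    intro π q hπ
    have := H π A.root q hπ
    rwa [hr] at this
  intro π
  induction π with
  | nil => intro q0 q hq; simp [deltaStar] at hq ⊢; rw [hq]
  | cons f rest ih =>
    intro q0 q hq
    simp only [deltaStar] at hq ⊢
    cases hq1 : A.delta q0 f with
    | none => simp [hq1] at hq
    | some q1 =>
      rw [hq1] at hq
      rw [hd q0 f q1 hq1]
      exact ih q1 q hq

lemma abs_theta {F N T : Type*} (θ : N → T) (A : TFS F N) (π : List F) :
    (Abs θ A).theta π = (A.val π).map θ := rfl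

lemma abs_rel {F N T : Type*} (θ : N → T) (A : TFS F N) (π₁ π₂ : List F) :
    (Abs θ A).rel π₁ π₂ ↔ ∃ q, A.val π₁ = some q ∧ A.val π₂ = some q := Iff.rfl

lemma abs_dom {F N T : Type*} (θ : N → T) (A : TFS F N) (π : List F) :
    π ∈ (Abs θ A).dom ↔ ∃ q, A.val π = some q := by
  simp only [PreAFS.dom, Set.mem_setOf_eq, abs_theta, Option.isSome_map,
    Option.isSome_iff_exists]

/-- `A ⊑ B` iff `Abs(A) ≼ Abs(B)`. -/
theorem subsumes_iff_absLE
    {F N T : Type*} [Finite F] [Finite T] [PartialOrder T] [Infinite N]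
    (hbc : BddComplete T) (θ : N → T)
    (A B : TFS F N) :
    Subsumes θ A B ↔ AbsLE (Abs θ A) (Abs θ B) := by
  constructor
  · rintro ⟨h, hQ, hroot, hθ, hδ⟩
    have key := morph_val A B h hroot hδ
    refine ⟨?_, ?_, ?_⟩
    · intro π hπ
      obtain ⟨q, hq⟩ := (abs_dom θ A π).mp hπ
      exact (abs_dom θ B π).mpr ⟨h q, key π q hq⟩
    · rintro π₁ π₂ ⟨q, h1, h2⟩
      exact ⟨h q, key π₁ q h1, key π₂ q h2⟩
    · intro π hπ t₁ t₂ h1 h2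
      rw [abs_theta] at h1 h2
      obtain ⟨q, hq, rfl⟩ := Option.map_eq_some_iff.mp h1
      rw [key π q hq, Option.map_some] at h2
      obtain rfl : θ (h q) = t₂ := Option.some_inj.mp h2
      exact hθ q (val_mem A hq)
  · rintro ⟨hdom, hrel, hθ⟩
    classical
    choose pth hpth using A.reach
    have hBsome : ∀ (q : N) (hq : q ∈ A.Q), (B.val (pth q hq)).isSome := by
      intro q hq
      have h1 : pth q hq ∈ (Abs θ A).dom := (abs_dom θ A _).mpr ⟨q, hpth q hq⟩
      obtain ⟨q', hq'⟩ := (abs_dom θ B _).mp (hdom h1)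
      exact Option.isSome_iff_exists.mpr ⟨q', hq'⟩
    set h : N → N := fun q =>
      if hq : q ∈ A.Q then (B.val (pth q hq)).get (hBsome q hq) else B.root with hh
    have hval : ∀ (q : N) (hq : q ∈ A.Q), B.val (pth q hq) = some (h q) := by
      intro q hq
      simp only [hh, dif_pos hq, Option.some_get]
    have key : ∀ (σ : List F) (q : N), A.val σ = some q → B.val σ = some (h q) := by
      intro σ q hσ
      have hq : q ∈ A.Q := val_mem A hσ
      obtain ⟨q', h1, h2⟩ := hrel _ _ ((abs_rel θ A σ (pth q hq)).mpr ⟨q, hσ, hpth q hq⟩)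
      rw [hval q hq] at h2
      rw [h1, ← Option.some_inj.mp h2]
    have hroot : h A.root = B.root := by
      have h1 : A.val ([] : List F) = some A.root := rfl
      have h2 : B.val ([] : List F) = some B.root := rfl
      have := key [] A.root h1
      rw [h2] at this
      exact (Option.some_inj.mp this).symm
    refine ⟨h, ?_, hroot, ?_, ?_⟩
    · intro q hq
      exact val_mem B (hval q hq)
    · intro q hq
      have h1 : (Abs θ A).theta (pth q hq) = some (θ q) := by
        rw [abs_theta, show A.val (pth q hq) = some q from hpth q hq, Option.map_some]
      have h2 : (Abs θ B).theta (pth q hq) = some (θ (h q)) := by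
        rw [abs_theta, hval q hq, Option.map_some]
      exact hθ _ ((abs_dom θ A _).mpr ⟨q, hpth q hq⟩) _ _ h1 h2
    · intro q f q' hqf
      obtain ⟨hq, hq'⟩ := A.delta_dom q f q' hqf
      have hA : A.val (pth q hq ++ [f]) = some q' := by
        unfold TFS.val
        rw [deltaStar_append, show deltaStar A.delta A.root (pth q hq) = some q from hpth q hq]
        simp [deltaStar, hqf]
      have hB := key _ q' hA
      unfold TFS.val at hB
      rw [deltaStar_append] at hB
      have hv := hval q hq
      unfold TFS.val at hv
      rw [hv] at hB
      simpa [deltaStar] using hB
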